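/- Let q be a prime, let n ≥ 1, and let a, v ∈ (ℤ/qℤ)^n. Then Pr[M_n · a = v] = q^{−n} · Σ_{ℓ ∈ (ℤ/qℤ)^n} e^{−2πi·⟨ℓ,v⟩/q} · ∏_{1 ≤ i < j ≤ n} cos(2π(ℓ_i a_j + ℓ_j a_i)/q) · ∏_{i=1}^n cos(2π ℓ_i a_i /q), where for an element x ∈ ℤ/qℤ the expressions e^{2πi x/q} and cos(2πx/q) are evaluated at any integer representative of x (they are well-defined since all representatives differ by multiples of q), ⟨ℓ,v⟩ = Σ_i ℓ_i v_i ∈ ℤ/qℤ, and the equality is between complex numbers (the left-hand side being the real probability viewed as a complex number). -/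

import Mathlib

/-- The random symmetric ±1 matrix: the upper-triangular entries
(including diagonal) are determined by independent fair coin flips
`σ i j` for `i ≤ j`, and the matrix is symmetric. -/
def signMatrix (n : ℕ) (σ : Fin n → Fin n → Bool) : Matrix (Fin n) (Fin n) ℤ :=
  fun i j => if σ (min i j) (max i j) then 1 else -1

/-- Probability, under the uniform distribution on symmetric ±1 matrices,
that the matrix satisfies `P`. -/
noncomputable def probSym (n : ℕ) (P : Matrix (Fin n) (Fin n) ℤ → Prop) : ℝ :=
  (Nat.card {σ : Fin n → Fin n → Bool // P (signMatrix n σ)} : ℝ) /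
    Fintype.card (Fin n → Fin n → Bool)

section FourierAux
open Finset

noncomputable def eZ (q : ℕ) (x : ZMod q) : ℂ :=
  Complex.exp (2 * Real.pi * Complex.I * (x.val : ℂ) / q)

lemma eZ_eq_pow (q : ℕ) (x : ZMod q) :
    eZ q x = Complex.exp (2 * Real.pi * Complex.I / q) ^ x.val := by
  rw [eZ, ← Complex.exp_nat_mul]
  congr 1
  ring

lemma zeta_pow_q {q : ℕ} (hq : q ≠ 0) :
    Complex.exp (2 * Real.pi * Complex.I / q) ^ q = 1 := by
  rw [← Complex.exp_nat_mul]
  have hq' : (q : ℂ) ≠ 0 := Nat.cast_ne_zero.mpr hq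
  rw [show (q : ℂ) * (2 * Real.pi * Complex.I / q) = 2 * Real.pi * Complex.I by
    field_simp]
  exact Complex.exp_two_pi_mul_I

lemma zeta_pow_mod {q : ℕ} (hq : q ≠ 0) (m : ℕ) :
    Complex.exp (2 * Real.pi * Complex.I / q) ^ (m % q)
      = Complex.exp (2 * Real.pi * Complex.I / q) ^ m := by
  conv_rhs => rw [← Nat.div_add_mod m q]
  rw [pow_add, pow_mul, zeta_pow_q hq, one_pow, one_mul]

lemma eZ_add {q : ℕ} [NeZero q] (x y : ZMod q) : eZ q (x + y) = eZ q x * eZ q y := by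
  rw [eZ_eq_pow, eZ_eq_pow, eZ_eq_pow, ← pow_add, ZMod.val_add, zeta_pow_mod (NeZero.ne q)]

lemma eZ_zero {q : ℕ} [NeZero q] : eZ q 0 = 1 := by
  simp [eZ, ZMod.val_zero]

lemma eZ_sum {q : ℕ} [NeZero q] {ι : Type*} (s : Finset ι) (f : ι → ZMod q) :
    eZ q (∑ i ∈ s, f i) = ∏ i ∈ s, eZ q (f i) := by
  classical
  induction s using Finset.induction with
  | empty => simp [eZ_zero]
  | insert _ _ h ih => rw [Finset.sum_insert h, Finset.prod_insert h, eZ_add, ih]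

lemma eZ_neg {q : ℕ} [NeZero q] (x : ZMod q) :
    eZ q (-x) = Complex.exp (-(2 * Real.pi * Complex.I * (x.val : ℂ)) / q) := by
  have h : eZ q (-x) * eZ q x = 1 := by rw [← eZ_add, neg_add_cancel, eZ_zero]
  have hx : eZ q x ≠ 0 := Complex.exp_ne_zero _
  have : eZ q (-x) = (eZ q x)⁻¹ := by
    exact eq_inv_of_mul_eq_one_left h
  rw [this, eZ, ← Complex.exp_neg, neg_div]

lemma eZ_cos {q : ℕ} [NeZero q] (x : ZMod q) :
    eZ q x + eZ q (-x) = 2 * ((Real.cos (2 * Real.pi * (x.val : ℝ) / q) : ℝ) : ℂ) := by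
  rw [eZ, eZ_neg, Complex.ofReal_cos, Complex.two_cos]
  congr 1
  · congr 1; push_cast; ring
  · congr 1; push_cast; ring

lemma sum_eZ_all {q : ℕ} [NeZero q] (hq : 1 < q) :
    ∑ t : ZMod q, eZ q t = 0 := by
  have hrange : ∑ t : ZMod q, eZ q t
      = ∑ k ∈ Finset.range q, Complex.exp (2 * Real.pi * Complex.I / q) ^ k := by
    refine Finset.sum_nbij' (fun t : ZMod q => t.val) (fun k => (k : ZMod q)) ?_ ?_ ?_ ?_ ?_
    · intro t _; exact Finset.mem_range.mpr (ZMod.val_lt t)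
    · intro k _; exact Finset.mem_univ _
    · intro t _; exact ZMod.natCast_rightInverse t
    · intro k hk; exact ZMod.val_cast_of_lt (Finset.mem_range.1 hk)
    · intro t _; exact eZ_eq_pow q t
  rw [hrange, geom_sum_eq, zeta_pow_q (by omega : q ≠ 0), sub_self, zero_div]
  exact (Complex.isPrimitiveRoot_exp q (by omega)).ne_one hq

lemma sum_eZ_mul {q : ℕ} [Fact q.Prime] (x : ZMod q) :
    ∑ t : ZMod q, eZ q (t * x) = if x = 0 then (q : ℂ) else 0 := by
  haveI : NeZero q := ⟨(Fact.out : q.Prime).ne_zero⟩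
  by_cases hx : x = 0
  · simp [hx, eZ_zero, ZMod.card]
  · rw [if_neg hx, ← sum_eZ_all (Fact.out : q.Prime).one_lt]
    exact Fintype.sum_equiv (Equiv.mulRight₀ x hx) _ _ (fun t => rfl)

lemma sum_eZ_pi {n q : ℕ} [Fact q.Prime] (d : Fin n → ZMod q) :
    ∑ ℓ : Fin n → ZMod q, eZ q (∑ i, ℓ i * d i)
      = if d = 0 then ((q : ℂ)) ^ n else 0 := by
  haveI : NeZero q := ⟨(Fact.out : q.Prime).ne_zero⟩
  classical
  calc ∑ ℓ : Fin n → ZMod q, eZ q (∑ i, ℓ i * d i)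
      = ∑ ℓ : Fin n → ZMod q, ∏ i, eZ q (ℓ i * d i) := by
        simp_rw [eZ_sum]
    _ = ∏ i : Fin n, ∑ t : ZMod q, eZ q (t * d i) := (Fintype.prod_sum (fun (i : Fin n) (t : ZMod q) => eZ q (t * d i))).symm
    _ = ∏ i : Fin n, (if d i = 0 then (q : ℂ) else 0) := by simp_rw [sum_eZ_mul]
    _ = if d = 0 then ((q : ℂ)) ^ n else 0 := by
        by_cases hd : d = 0
        · simp [hd]
        · rw [if_neg hd]
          obtain ⟨i, hi⟩ : ∃ i, d i ≠ 0 := by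
            by_contra h; push_neg at h; exact hd (funext h)
          exact Finset.prod_eq_zero (Finset.mem_univ i) (if_neg hi)

lemma filter_gt_of_not_lt {n : ℕ} :
    ((Finset.univ.filter fun p : Fin n × Fin n => ¬ p.1 < p.2).filter fun p => p.2 < p.1)
      = Finset.univ.filter fun p : Fin n × Fin n => p.2 < p.1 := by
  ext p
  simp only [Finset.mem_filter, Finset.mem_univ, true_and]
  exact ⟨fun h => h.2, fun h => ⟨asymm h, h⟩⟩

lemma filter_diag_of_not_lt {n : ℕ} :
    ((Finset.univ.filter fun p : Fin n × Fin n => ¬ p.1 < p.2).filter fun p => ¬ p.2 < p.1)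
      = Finset.univ.filter fun p : Fin n × Fin n => p.1 = p.2 := by
  ext p
  simp only [Finset.mem_filter, Finset.mem_univ, true_and]
  constructor
  · rintro ⟨h1, h2⟩; exact le_antisymm (not_lt.1 h2) (not_lt.1 h1)
  · intro h; rw [h]; exact ⟨lt_irrefl _, lt_irrefl _⟩

lemma sum_diag_reindex {n : ℕ} {M : Type*} [AddCommMonoid M] (f : Fin n × Fin n → M) :
    ∑ p ∈ Finset.univ.filter (fun p : Fin n × Fin n => p.1 = p.2), f p = ∑ i, f (i, i) := by
  refine Finset.sum_nbij' (fun p => p.1) (fun i => (i, i)) ?_ ?_ ?_ ?_ ?_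
  · intro p _; exact Finset.mem_univ _
  · intro i _; simp
  · intro p hp
    have : p.1 = p.2 := by simpa using hp
    exact Prod.ext rfl this
  · intro i _; rfl
  · intro p hp
    have h : p.1 = p.2 := by simpa using hp
    conv_lhs => rw [← Prod.mk.eta (p := p), ← h]

lemma prod_diag_reindex {n : ℕ} {M : Type*} [CommMonoid M] (f : Fin n × Fin n → M) :
    ∏ p ∈ Finset.univ.filter (fun p : Fin n × Fin n => p.1 = p.2), f p = ∏ i, f (i, i) := by
  refine Finset.prod_nbij' (fun p => p.1) (fun i => (i, i)) ?_ ?_ ?_ ?_ ?_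
  · intro p _; exact Finset.mem_univ _
  · intro i _; simp
  · intro p hp
    have : p.1 = p.2 := by simpa using hp
    exact Prod.ext rfl this
  · intro i _; rfl
  · intro p hp
    have h : p.1 = p.2 := by simpa using hp
    conv_lhs => rw [← Prod.mk.eta (p := p), ← h]

lemma sum_univ_triple {n : ℕ} {M : Type*} [AddCommMonoid M] (f : Fin n × Fin n → M) :
    ∑ p : Fin n × Fin n, f p
      = ((∑ p ∈ Finset.univ.filter (fun p : Fin n × Fin n => p.1 < p.2), f p)
        + ∑ p ∈ Finset.univ.filter (fun p : Fin n × Fin n => p.2 < p.1), f p)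
        + ∑ i, f (i, i) := by
  classical
  rw [← Finset.sum_filter_add_sum_filter_not Finset.univ (fun p : Fin n × Fin n => p.1 < p.2) f,
    ← Finset.sum_filter_add_sum_filter_not
      (Finset.univ.filter fun p : Fin n × Fin n => ¬ p.1 < p.2) (fun p => p.2 < p.1) f,
    filter_gt_of_not_lt, filter_diag_of_not_lt, sum_diag_reindex, add_assoc]

lemma prod_univ_triple {n : ℕ} {M : Type*} [CommMonoid M] (f : Fin n × Fin n → M) :
    ∏ p : Fin n × Fin n, f p
      = ((∏ p ∈ Finset.univ.filter (fun p : Fin n × Fin n => p.1 < p.2), f p)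
        * ∏ p ∈ Finset.univ.filter (fun p : Fin n × Fin n => p.2 < p.1), f p)
        * ∏ i, f (i, i) := by
  classical
  rw [← Finset.prod_filter_mul_prod_filter_not Finset.univ (fun p : Fin n × Fin n => p.1 < p.2) f,
    ← Finset.prod_filter_mul_prod_filter_not
      (Finset.univ.filter fun p : Fin n × Fin n => ¬ p.1 < p.2) (fun p => p.2 < p.1) f,
    filter_gt_of_not_lt, filter_diag_of_not_lt, prod_diag_reindex, mul_assoc]

lemma key {n q : ℕ} [NeZero q] (a ℓ : Fin n → ZMod q) :
    ∑ σ : Fin n → Fin n → Bool,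
        eZ q (∑ i, ℓ i * ((signMatrix n σ).map (Int.cast : ℤ → ZMod q)).mulVec a i)
      = 2 ^ (n * n) *
        ((∏ p ∈ Finset.univ.filter (fun p : Fin n × Fin n => p.1 < p.2),
            ((Real.cos (2 * Real.pi
              * ((ℓ p.1 * a p.2 + ℓ p.2 * a p.1 : ZMod q).val : ℝ) / q) : ℝ) : ℂ))
          * ∏ i, ((Real.cos (2 * Real.pi * ((ℓ i * a i : ZMod q).val : ℝ) / q) : ℝ) : ℂ)) := by
  classical
  set ε : Bool → ZMod q := fun b => if b then 1 else -1 with hε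
  set c : Fin n × Fin n → ZMod q := fun p => ℓ p.1 * a p.2 + ℓ p.2 * a p.1 with hc
  set g : Fin n × Fin n → Bool → ℂ := fun p b =>
    if p.1 < p.2 then eZ q (ε b * c p)
    else if p.1 = p.2 then eZ q (ε b * (ℓ p.1 * a p.1)) else 1 with hg
  set h : Fin n × Fin n → ℂ := fun p =>
    if p.1 < p.2 then ((Real.cos (2 * Real.pi * ((c p).val : ℝ) / q) : ℝ) : ℂ)
    else if p.1 = p.2 then
      ((Real.cos (2 * Real.pi * ((ℓ p.1 * a p.1 : ZMod q).val : ℝ) / q) : ℝ) : ℂ)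
    else 1 with hh
  have hent : ∀ (σ : Fin n → Fin n → Bool) (i j : Fin n),
      ((signMatrix n σ).map (Int.cast : ℤ → ZMod q)) i j = ε (σ (min i j) (max i j)) := by
    intro σ i j
    simp only [Matrix.map_apply, signMatrix, hε, apply_ite (Int.cast : ℤ → ZMod q),
      Int.cast_one, Int.cast_neg]
  have hstep1 : ∀ σ : Fin n → Fin n → Bool,
      eZ q (∑ i, ℓ i * ((signMatrix n σ).map (Int.cast : ℤ → ZMod q)).mulVec a i)
        = ∏ p : Fin n × Fin n, g p (σ p.1 p.2) := by
    intro σ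
    have hin : (∑ i, ℓ i * ((signMatrix n σ).map (Int.cast : ℤ → ZMod q)).mulVec a i)
        = (∑ p ∈ Finset.univ.filter (fun p : Fin n × Fin n => p.1 < p.2),
            ε (σ p.1 p.2) * c p)
          + ∑ i, ε (σ i i) * (ℓ i * a i) := by
      have h0 : (∑ i, ℓ i * ((signMatrix n σ).map (Int.cast : ℤ → ZMod q)).mulVec a i)
          = ∑ p : Fin n × Fin n, ℓ p.1 * (ε (σ (min p.1 p.2) (max p.1 p.2)) * a p.2) := by
        rw [Fintype.sum_prod_type]
        simp_rw [Matrix.mulVec, dotProduct, hent, Finset.mul_sum]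
      rw [h0, sum_univ_triple]
      have hswap : ∑ p ∈ Finset.univ.filter (fun p : Fin n × Fin n => p.2 < p.1),
            ℓ p.1 * (ε (σ (min p.1 p.2) (max p.1 p.2)) * a p.2)
          = ∑ p ∈ Finset.univ.filter (fun p : Fin n × Fin n => p.1 < p.2),
            ℓ p.2 * (ε (σ (min p.1 p.2) (max p.1 p.2)) * a p.1) := by
        refine Finset.sum_nbij' Prod.swap Prod.swap ?_ ?_ ?_ ?_ ?_
        · intro p hp; simp only [Finset.mem_filter, Finset.mem_univ, true_and] at hp ⊢
          exact hp
        · intro p hp; simp only [Finset.mem_filter, Finset.mem_univ, true_and] at hp ⊢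
          exact hp
        · intro p _; rfl
        · intro p _; rfl
        · intro p _
          simp only [Prod.fst_swap, Prod.snd_swap, min_comm p.2 p.1, max_comm p.2 p.1]
      rw [hswap, ← Finset.sum_add_distrib]
      congr 1
      · refine Finset.sum_congr rfl fun p hp => ?_
        have hlt : p.1 < p.2 := by simpa using hp
        rw [min_eq_left hlt.le, max_eq_right hlt.le, hc]
        ring
      · refine Finset.sum_congr rfl fun i _ => ?_
        rw [min_self, max_self]
        ring
    rw [hin, eZ_add, eZ_sum, eZ_sum, prod_univ_triple (fun p => g p (σ p.1 p.2))]
    have hgt1 : ∏ p ∈ Finset.univ.filter (fun p : Fin n × Fin n => p.2 < p.1),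
        g p (σ p.1 p.2) = 1 := by
      refine Finset.prod_eq_one fun p hp => ?_
      have hlt : p.2 < p.1 := by simpa using hp
      rw [hg]
      simp only
      rw [if_neg (asymm hlt), if_neg (ne_of_gt hlt)]
    rw [hgt1, mul_one]
    congr 1
    · refine Finset.prod_congr rfl fun p hp => ?_
      have hlt : p.1 < p.2 := by simpa using hp
      rw [hg]; simp only; rw [if_pos hlt]
    · refine Finset.prod_congr rfl fun i _ => ?_
      simp [hg]
  calc ∑ σ : Fin n → Fin n → Bool,
        eZ q (∑ i, ℓ i * ((signMatrix n σ).map (Int.cast : ℤ → ZMod q)).mulVec a i)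
      = ∑ σ : Fin n → Fin n → Bool, ∏ p : Fin n × Fin n, g p (σ p.1 p.2) :=
        Finset.sum_congr rfl fun σ _ => hstep1 σ
    _ = ∑ τ : Fin n × Fin n → Bool, ∏ p : Fin n × Fin n, g p (τ p) :=
        (Equiv.sum_comp (Equiv.curry (Fin n) (Fin n) Bool)
          (fun σ : Fin n → Fin n → Bool => ∏ p : Fin n × Fin n, g p (σ p.1 p.2))).symm
    _ = ∏ p : Fin n × Fin n, ∑ b : Bool, g p b :=
        (Fintype.prod_sum (fun (p : Fin n × Fin n) (b : Bool) => g p b)).symm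
    _ = ∏ p : Fin n × Fin n, (2 * h p) := by
        refine Finset.prod_congr rfl fun p _ => ?_
        rw [Fintype.sum_bool, hg, hh]
        simp only
        by_cases h1 : p.1 < p.2
        · rw [if_pos h1, if_pos h1, if_pos h1]
          have : ε true * c p = c p := by rw [hε]; simp
          rw [this]
          have : ε false * c p = -(c p) := by rw [hε]; simp
          rw [this, eZ_cos]
        · by_cases h2 : p.1 = p.2
          · rw [if_neg h1, if_neg h1, if_neg h1, if_pos h2, if_pos h2, if_pos h2]
            have e1 : ε true * (ℓ p.1 * a p.1) = ℓ p.1 * a p.1 := by rw [hε]; simp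
            have e2 : ε false * (ℓ p.1 * a p.1) = -(ℓ p.1 * a p.1) := by rw [hε]; simp
            rw [e1, e2, eZ_cos]
          · rw [if_neg h1, if_neg h1, if_neg h1, if_neg h2, if_neg h2, if_neg h2]
            norm_num
    _ = 2 ^ (n * n) * ∏ p : Fin n × Fin n, h p := by
        rw [Finset.prod_mul_distrib, Finset.prod_const, Finset.card_univ,
          Fintype.card_prod, Fintype.card_fin]
    _ = 2 ^ (n * n) *
        ((∏ p ∈ Finset.univ.filter (fun p : Fin n × Fin n => p.1 < p.2),
            ((Real.cos (2 * Real.pi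
              * ((ℓ p.1 * a p.2 + ℓ p.2 * a p.1 : ZMod q).val : ℝ) / q) : ℝ) : ℂ))
          * ∏ i, ((Real.cos (2 * Real.pi * ((ℓ i * a i : ZMod q).val : ℝ) / q) : ℝ) : ℂ)) := by
        rw [prod_univ_triple h]
        have hgt1 : ∏ p ∈ Finset.univ.filter (fun p : Fin n × Fin n => p.2 < p.1), h p = 1 := by
          refine Finset.prod_eq_one fun p hp => ?_
          have hlt : p.2 < p.1 := by simpa using hp
          rw [hh]; simp only; rw [if_neg (asymm hlt), if_neg (ne_of_gt hlt)]
        rw [hgt1, mul_one]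
        congr 1
        congr 1
        · refine Finset.prod_congr rfl fun p hp => ?_
          have hlt : p.1 < p.2 := by simpa using hp
          rw [hh]; simp only; rw [if_pos hlt]
        · refine Finset.prod_congr rfl fun i _ => ?_
          simp [hh]

end FourierAux

/-- The Fourier expansion of `Pr[M_n · a = v]` over `ℤ/qℤ`: it equals
`q^(-n) Σ_ℓ e^(-2πi⟨ℓ,v⟩/q) ∏_{i<j} cos(2π(ℓᵢaⱼ+ℓⱼaᵢ)/q) ∏_i cos(2πℓᵢaᵢ/q)`,
where elements of `ℤ/qℤ` are evaluated at their canonical integer representative. -/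

theorem fourier_expansion (n q : ℕ) [Fact q.Prime] (hn : 1 ≤ n)
    (a v : Fin n → ZMod q) :
    (probSym n (fun M => (M.map (Int.cast : ℤ → ZMod q)).mulVec a = v) : ℂ)
      = (q : ℂ) ^ (-(n : ℤ)) *
        ∑ ℓ : Fin n → ZMod q,
          Complex.exp (-(2 * (Real.pi : ℂ) * Complex.I
              * ((∑ i, ℓ i * v i : ZMod q).val : ℂ)) / q)
          * (∏ p ∈ Finset.univ.filter (fun p : Fin n × Fin n => p.1 < p.2),
              ((Real.cos (2 * Real.pi
                * ((ℓ p.1 * a p.2 + ℓ p.2 * a p.1 : ZMod q).val : ℝ) / q) : ℝ) : ℂ))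
          * ∏ i : Fin n,
              ((Real.cos (2 * Real.pi * ((ℓ i * a i : ZMod q).val : ℝ) / q) : ℝ) : ℂ) := by
  classical
  haveI : NeZero q := ⟨(Fact.out : q.Prime).ne_zero⟩
  have hq0 : (q : ℂ) ≠ 0 := Nat.cast_ne_zero.mpr (NeZero.ne q)
  have h2 : (2 : ℂ) ^ (n * n) ≠ 0 := pow_ne_zero _ two_ne_zero
  have hcardfun : (Fintype.card (Fin n → Fin n → Bool) : ℂ) = 2 ^ (n * n) := by
    simp [Fintype.card_fun, ← pow_mul]
  have hA : (probSym n (fun M => (M.map (Int.cast : ℤ → ZMod q)).mulVec a = v) : ℂ)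
      = (∑ σ : Fin n → Fin n → Bool,
          if ((signMatrix n σ).map (Int.cast : ℤ → ZMod q)).mulVec a = v then (1:ℂ) else 0)
        / 2 ^ (n * n) := by
    rw [probSym]
    push_cast
    rw [hcardfun]
    congr 1
    rw [Nat.card_eq_fintype_card, Fintype.card_subtype, Finset.sum_boole]
  have hB : ∀ σ : Fin n → Fin n → Bool,
      (if ((signMatrix n σ).map (Int.cast : ℤ → ZMod q)).mulVec a = v then (1:ℂ) else 0)
        = (q:ℂ)^(-(n:ℤ)) * ∑ ℓ : Fin n → ZMod q,
            eZ q (∑ i, ℓ i *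
              (((signMatrix n σ).map (Int.cast : ℤ → ZMod q)).mulVec a i - v i)) := by
    intro σ
    have h1 := sum_eZ_pi
      (fun i => ((signMatrix n σ).map (Int.cast : ℤ → ZMod q)).mulVec a i - v i)
    rw [h1]
    have hiff : ((fun i => ((signMatrix n σ).map (Int.cast : ℤ → ZMod q)).mulVec a i - v i)
          = 0)
        ↔ ((signMatrix n σ).map (Int.cast : ℤ → ZMod q)).mulVec a = v := by
      constructor
      · intro h; funext i
        have := congrFun h i
        simpa [sub_eq_zero] using this
      · intro h; funext i
        rw [h]; simp
    by_cases hPv : ((signMatrix n σ).map (Int.cast : ℤ → ZMod q)).mulVec a = v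
    · rw [if_pos hPv, if_pos (hiff.mpr hPv), zpow_neg, ← zpow_natCast,
        inv_mul_cancel₀ (zpow_ne_zero _ hq0)]
    · rw [if_neg hPv, if_neg (fun h => hPv (hiff.mp h)), mul_zero]
  have hsplit : ∀ (σ : Fin n → Fin n → Bool) (ℓ : Fin n → ZMod q),
      (∑ i, ℓ i * (((signMatrix n σ).map (Int.cast : ℤ → ZMod q)).mulVec a i - v i))
        = (-(∑ i, ℓ i * v i))
          + ∑ i, ℓ i * ((signMatrix n σ).map (Int.cast : ℤ → ZMod q)).mulVec a i := by
    intro σ ℓ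
    simp_rw [mul_sub]
    rw [Finset.sum_sub_distrib, sub_eq_neg_add]
  rw [hA]
  calc (∑ σ : Fin n → Fin n → Bool,
          if ((signMatrix n σ).map (Int.cast : ℤ → ZMod q)).mulVec a = v then (1:ℂ) else 0)
        / 2 ^ (n * n)
      = (∑ σ : Fin n → Fin n → Bool, (q:ℂ)^(-(n:ℤ)) *
          ∑ ℓ : Fin n → ZMod q, eZ q (∑ i, ℓ i *
            (((signMatrix n σ).map (Int.cast : ℤ → ZMod q)).mulVec a i - v i)))
        / 2 ^ (n * n) := by
        rw [Finset.sum_congr rfl fun σ _ => hB σ]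
    _ = (q:ℂ)^(-(n:ℤ)) * (∑ ℓ : Fin n → ZMod q, ∑ σ : Fin n → Fin n → Bool,
          eZ q (∑ i, ℓ i *
            (((signMatrix n σ).map (Int.cast : ℤ → ZMod q)).mulVec a i - v i)))
        / 2 ^ (n * n) := by
        rw [← Finset.mul_sum, Finset.sum_comm]
    _ = (q:ℂ)^(-(n:ℤ)) * (∑ ℓ : Fin n → ZMod q,
          eZ q (-(∑ i, ℓ i * v i)) * ∑ σ : Fin n → Fin n → Bool,
            eZ q (∑ i, ℓ i * ((signMatrix n σ).map (Int.cast : ℤ → ZMod q)).mulVec a i))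
        / 2 ^ (n * n) := by
        congr 2
        refine Finset.sum_congr rfl fun ℓ _ => ?_
        rw [Finset.mul_sum]
        refine Finset.sum_congr rfl fun σ _ => ?_
        rw [hsplit σ ℓ, eZ_add]
    _ = (q:ℂ)^(-(n:ℤ)) * (∑ ℓ : Fin n → ZMod q,
          eZ q (-(∑ i, ℓ i * v i)) * (2 ^ (n * n) *
          ((∏ p ∈ Finset.univ.filter (fun p : Fin n × Fin n => p.1 < p.2),
              ((Real.cos (2 * Real.pi
                * ((ℓ p.1 * a p.2 + ℓ p.2 * a p.1 : ZMod q).val : ℝ) / q) : ℝ) : ℂ))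
            * ∏ i, ((Real.cos (2 * Real.pi * ((ℓ i * a i : ZMod q).val : ℝ) / q) : ℝ) : ℂ))))
        / 2 ^ (n * n) := by
        congr 2
        exact Finset.sum_congr rfl fun ℓ _ => by rw [key a ℓ]
    _ = (q : ℂ) ^ (-(n : ℤ)) *
        ∑ ℓ : Fin n → ZMod q,
          Complex.exp (-(2 * (Real.pi : ℂ) * Complex.I
              * ((∑ i, ℓ i * v i : ZMod q).val : ℂ)) / q)
          * (∏ p ∈ Finset.univ.filter (fun p : Fin n × Fin n => p.1 < p.2),
              ((Real.cos (2 * Real.pi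
                * ((ℓ p.1 * a p.2 + ℓ p.2 * a p.1 : ZMod q).val : ℝ) / q) : ℝ) : ℂ))
          * ∏ i : Fin n,
              ((Real.cos (2 * Real.pi * ((ℓ i * a i : ZMod q).val : ℝ) / q) : ℝ) : ℂ) := by
        rw [mul_div_assoc, Finset.sum_div]
        congr 1
        refine Finset.sum_congr rfl fun ℓ _ => ?_
        rw [eZ_neg]
        generalize (Complex.exp (-(2 * (Real.pi : ℂ) * Complex.I
              * ((∑ i, ℓ i * v i : ZMod q).val : ℂ)) / q)) = E
        generalize (∏ p ∈ Finset.univ.filter (fun p : Fin n × Fin n => p.1 < p.2),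
              ((Real.cos (2 * Real.pi
                * ((ℓ p.1 * a p.2 + ℓ p.2 * a p.1 : ZMod q).val : ℝ) / q) : ℝ) : ℂ)) = C
        generalize (∏ i : Fin n,
              ((Real.cos (2 * Real.pi * ((ℓ i * a i : ZMod q).val : ℝ) / q) : ℝ) : ℂ)) = D
        rw [show E * (2 ^ (n*n) * (C * D)) = (E * C * D) * 2 ^ (n*n) by ring,
          mul_div_cancel_right₀ _ h2]
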